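/- For ℙ-a.e. ω ∈ Ω^ℤ, the pushforward measures (f^n_{θ^{-n}ω})_* μ converge weakly to the sample measure μ_ω as n → ∞; that is, for every continuous φ : M → ℝ, ∫ φ d((f^n_{θ^{-n}ω})_* μ) → ∫ φ dμ_ω. Consequently μ_ω depends (ℙ-a.s.) only on the coordinates (ω_n)_{n≤0}: there is a measurable family (ν_{ω⁻})_{ω⁻ ∈ ∏_{n≤0}Ω} of Borel probability measures on M with μ_ω = ν_{(ω_n)_{n≤0}} for ℙ-a.e. ω. -/

import Mathlib

open MeasureTheory Filter
open scoped ENNReal NNReal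

def IsIIDProduct {Ω : Type*} [MeasurableSpace Ω] (ι : Type*) (P : Measure Ω)
    (Q : Measure (ι → Ω)) : Prop :=
  IsProbabilityMeasure Q ∧
    ∀ (s : Finset ι) (t : ι → Set Ω), (∀ i, MeasurableSet (t i)) →
      Q {x : ι → Ω | ∀ i ∈ s, x i ∈ t i} = ∏ i ∈ s, P (t i)

noncomputable def fwdPast {Ω M : Type*} [TopologicalSpace M] (f : Ω → Homeomorph M M)
    (ω : ℤ → Ω) : ℕ → M → M
  | 0 => id
  | n + 1 => (fwdPast f ω n) ∘ ⇑(f (ω (-(n : ℤ))))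

section Aux

variable {Ω : Type*} [MeasurableSpace Ω]

/-- Uniqueness of the iid product. -/
lemma IsIIDProduct.unique {ι : Type*} (P : Measure Ω) {Q1 Q2 : Measure (ι → Ω)}
    (h1 : IsIIDProduct ι P Q1) (h2 : IsIIDProduct ι P Q2) : Q1 = Q2 := by
  obtain ⟨hp1, hc1⟩ := h1
  obtain ⟨hp2, hc2⟩ := h2
  refine MeasureTheory.ext_of_generate_finite _
    (MeasureTheory.generateFrom_squareCylinders (α := fun _ : ι => Ω)).symm
    (MeasureTheory.isPiSystem_squareCylinders (fun _ => MeasurableSpace.isPiSystem_measurableSet)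
      (fun _ => MeasurableSet.univ)) ?_ ?_
  · rintro _ ⟨s, t, ht, rfl⟩
    simp only [Set.mem_univ_pi, Set.mem_setOf_eq] at ht
    have hEq : (↑s : Set ι).pi t = {x : ι → Ω | ∀ i ∈ s, x i ∈ t i} := by
      ext x; simp [Set.mem_pi]
    rw [hEq, hc1 s t ht, hc2 s t ht]
  · rw [hp1.measure_univ, hp2.measure_univ]

/-- The pushforward of an iid product over `ι'` under relabelling along an injective map
`r : ι → ι'` is the iid product over `ι`. -/
lemma IsIIDProduct.map_relabel {ι ι' : Type*} (P : Measure Ω) {Q : Measure (ι' → Ω)}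
    (hQ : IsIIDProduct ι' P Q) (r : ι → ι') (hr : Function.Injective r) :
    IsIIDProduct ι P (Measure.map (fun ω (j : ι) => ω (r j)) Q) := by
  obtain ⟨hp, hc⟩ := hQ
  have hmeas : Measurable (fun (ω : ι' → Ω) (j : ι) => ω (r j)) :=
    measurable_pi_lambda _ (fun j => measurable_pi_apply (r j))
  constructor
  · exact Measure.isProbabilityMeasure_map hmeas.aemeasurable
  · intro s t ht
    classical
    have hcyl : MeasurableSet {x : ι → Ω | ∀ i ∈ s, x i ∈ t i} := by
      have : {x : ι → Ω | ∀ i ∈ s, x i ∈ t i} = ⋂ i ∈ s, (fun x : ι → Ω => x i) ⁻¹' t i := by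
        ext x; simp
      rw [this]
      exact MeasurableSet.biInter s.countable_toSet (fun i _ => (measurable_pi_apply i) (ht i))
    rw [Measure.map_apply hmeas hcyl]
    set T : ι' → Set Ω := fun k => if h : ∃ i ∈ s, r i = k then t h.choose else Set.univ with hT
    have hTmeas : ∀ k, MeasurableSet (T k) := by
      intro k
      rw [hT]
      by_cases h : ∃ i ∈ s, r i = k
      · simp only [dif_pos h]; exact ht _
      · simp only [dif_neg h]; exact MeasurableSet.univ
    have hTr : ∀ i ∈ s, T (r i) = t i := by
      intro i hi
      have h : ∃ j ∈ s, r j = r i := ⟨i, hi, rfl⟩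
      have : h.choose = i := hr h.choose_spec.2
      simp only [hT, dif_pos h, this]
    have hSet : (fun ω (j : ι) => ω (r j)) ⁻¹' {x : ι → Ω | ∀ i ∈ s, x i ∈ t i}
        = {x : ι' → Ω | ∀ k ∈ s.image r, x k ∈ T k} := by
      ext ω
      simp only [Set.mem_preimage, Set.mem_setOf_eq, Finset.mem_image]
      constructor
      · rintro h k ⟨i, hi, rfl⟩
        rw [hTr i hi]; exact h i hi
      · intro h i hi
        rw [← hTr i hi]; exact h _ ⟨i, hi, rfl⟩
    rw [hSet, hc (s.image r) T hTmeas, Finset.prod_image (fun i _ j _ h => hr h)]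
    exact Finset.prod_congr rfl (fun i hi => by rw [hTr i hi])

end Aux

section Maps

variable {Ω M : Type*} [TopologicalSpace M] (f : Ω → Homeomorph M M)

/-- `fwdPast f ω n` only depends on the coordinates `ω (-k)` for `k < n`. -/
lemma fwdPast_congr {ω ω' : ℤ → Ω} :
    ∀ n : ℕ, (∀ k : ℕ, k < n → ω (-(k : ℤ)) = ω' (-(k : ℤ))) →
      fwdPast f ω n = fwdPast f ω' n := by
  intro n
  induction n with
  | zero => intro _; rfl
  | succ n ih =>
    intro h
    show fwdPast f ω n ∘ ⇑(f (ω (-(n : ℤ)))) = fwdPast f ω' n ∘ ⇑(f (ω' (-(n : ℤ))))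
    rw [ih (fun k hk => h k (Nat.lt_succ_of_lt hk)), h n (Nat.lt_succ_self n)]

lemma fwdPast_continuous (ω : ℤ → Ω) : ∀ n, Continuous (fwdPast f ω n) := by
  intro n
  induction n with
  | zero => exact continuous_id
  | succ n ih => exact ih.comp (f _).continuous

/-- future composition `f (ω n) ∘ ⋯ ∘ f (ω 1)`. -/
noncomputable def cmpFut (ω : ℤ → Ω) : ℕ → M → M
  | 0 => id
  | n + 1 => ⇑(f (ω ((n : ℤ) + 1))) ∘ cmpFut ω n

/-- composition `f (η (n-1)) ∘ ⋯ ∘ f (η 0)` indexed by `ℕ → Ω`. -/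
noncomputable def cmpN (η : ℕ → Ω) : ℕ → M → M
  | 0 => id
  | n + 1 => ⇑(f (η n)) ∘ cmpN η n

lemma cmpFut_eq_cmpN (ω : ℤ → Ω) : ∀ n, cmpFut f ω n = cmpN f (fun j : ℕ => ω ((j : ℤ) + 1)) n := by
  intro n
  induction n with
  | zero => rfl
  | succ n ih =>
    show ⇑(f (ω ((n : ℤ) + 1))) ∘ cmpFut f ω n = ⇑(f (ω ((n : ℤ) + 1))) ∘ cmpN f _ n
    rw [ih]

lemma cmpN_congr {η η' : ℕ → Ω} :
    ∀ n : ℕ, (∀ k : ℕ, k < n → η k = η' k) → cmpN f η n = cmpN f η' n := by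
  intro n
  induction n with
  | zero => intro _; rfl
  | succ n ih =>
    intro h
    show ⇑(f (η n)) ∘ cmpN f η n = ⇑(f (η' n)) ∘ cmpN f η' n
    rw [ih (fun k hk => h k (Nat.lt_succ_of_lt hk)), h n (Nat.lt_succ_self n)]

lemma cmpFut_shift (ω : ℤ → Ω) :
    ∀ n, cmpFut f ω (n + 1) = cmpFut f (fun k => ω (k + 1)) n ∘ ⇑(f (ω 1)) := by
  intro n
  induction n with
  | zero =>
    show ⇑(f (ω ((0 : ℤ) + 1))) ∘ id = id ∘ ⇑(f (ω 1))
    norm_num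
  | succ n ih =>
    show ⇑(f (ω ((n + 1 : ℕ) + 1 : ℤ))) ∘ cmpFut f ω (n + 1) = cmpFut f (fun k => ω (k + 1)) (n + 1) ∘ ⇑(f (ω 1))
    rw [ih]
    show _ = (⇑(f (ω ((n : ℤ) + 1 + 1))) ∘ cmpFut f (fun k => ω (k + 1)) n) ∘ ⇑(f (ω 1))
    have : ((n + 1 : ℕ) + 1 : ℤ) = (n : ℤ) + 1 + 1 := by push_cast; ring
    rw [this, Function.comp_assoc]

lemma fwdPast_eq_cmpFut (ω : ℤ → Ω) :
    ∀ n, fwdPast f ω n = cmpFut f (fun k => ω (k - n)) n := by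
  intro n
  induction n with
  | zero => rfl
  | succ n ih =>
    show fwdPast f ω n ∘ ⇑(f (ω (-(n : ℤ)))) = cmpFut f (fun k => ω (k - (n + 1 : ℕ))) (n + 1)
    rw [cmpFut_shift, ih]
    have h1 : (fun k : ℤ => (fun k : ℤ => ω (k - (n + 1 : ℕ))) (k + 1)) = fun k : ℤ => ω (k - n) := by
      funext k; congr 1; push_cast; ring
    have h2 : (1 : ℤ) - ((n + 1 : ℕ) : ℤ) = -(n : ℤ) := by push_cast; ring
    rw [h1, h2]

end Maps

section Meas

variable {Ω M : Type*} [MeasurableSpace Ω] [TopologicalSpace M] [MeasurableSpace M]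
  (f : Ω → Homeomorph M M)

lemma measurable_cmpN (hf : Measurable fun p : Ω × M => f p.1 p.2) (n : ℕ) :
    Measurable fun q : (ℕ → Ω) × M => cmpN f q.1 n q.2 := by
  induction n with
  | zero => exact measurable_snd
  | succ n ih =>
    show Measurable fun q : (ℕ → Ω) × M => f (q.1 n) (cmpN f q.1 n q.2)
    exact hf.comp (((measurable_pi_apply n).comp measurable_fst).prodMk ih)

lemma measurable_fwdPast (hf : Measurable fun p : Ω × M => f p.1 p.2) (n : ℕ) :
    Measurable fun q : (ℤ → Ω) × M => fwdPast f q.1 n q.2 := by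
  induction n with
  | zero => exact measurable_snd
  | succ n ih =>
    show Measurable fun q : (ℤ → Ω) × M => fwdPast f q.1 n (f (q.1 (-(n : ℤ))) q.2)
    exact ih.comp (measurable_fst.prodMk
      (hf.comp (((measurable_pi_apply _).comp measurable_fst).prodMk measurable_snd)))

lemma skew_iterate (n : ℕ) (x : M) (ω : ℤ → Ω) :
    (fun p : M × (ℤ → Ω) => ((f (p.2 1)) p.1, fun k => p.2 (k + 1)))^[n] (x, ω)
      = (cmpFut f ω n x, fun k => ω (k + n)) := by
  induction n with
  | zero => simp [cmpFut]
  | succ n ih =>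
    rw [Function.iterate_succ_apply', ih]
    show ((f ((fun k => ω (k + (n : ℤ))) 1)) (cmpFut f ω n x), fun k => (fun k => ω (k + n)) (k + 1))
      = (cmpFut f ω (n + 1) x, fun k => ω (k + ((n : ℕ) + 1 : ℤ)))
    rw [Prod.mk.injEq]
    constructor
    · show (f (ω (1 + (n : ℤ)))) (cmpFut f ω n x) = (f (ω ((n : ℤ) + 1))) (cmpFut f ω n x)
      rw [add_comm]
    · funext k
      show ω (k + 1 + n) = ω (k + ((n : ℕ) + 1 : ℤ))
      congr 1; push_cast; ring

end Meas

section CM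

variable {M : Type*} [MetricSpace M] [CompactSpace M] [MeasurableSpace M] [BorelSpace M]

lemma integrable_continuousMap (φ : C(M, ℝ)) (m : Measure M) [IsFiniteMeasure m] :
    Integrable (fun x => φ x) m := by
  refine (integrable_const (‖φ‖)).mono' φ.continuous.measurable.aestronglyMeasurable ?_
  exact Eventually.of_forall fun x => φ.norm_coe_le_norm x

lemma dist_integral_le (φ ψ : C(M, ℝ)) (m : Measure M) [IsProbabilityMeasure m] :
    dist (∫ x, φ x ∂m) (∫ x, ψ x ∂m) ≤ dist φ ψ := by
  rw [Real.dist_eq, ← integral_sub (integrable_continuousMap φ m) (integrable_continuousMap ψ m)]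
  calc |∫ x, (φ x - ψ x) ∂m| ≤ ∫ x, |φ x - ψ x| ∂m := by
        simpa [Real.norm_eq_abs] using norm_integral_le_integral_norm (μ := m) fun x => φ x - ψ x
    _ ≤ ∫ _x, dist φ ψ ∂m := by
        refine integral_mono ((integrable_continuousMap φ m).sub
          (integrable_continuousMap ψ m)).abs (integrable_const _) fun x => ?_
        rw [← Real.dist_eq]
        exact ContinuousMap.dist_apply_le_dist x
    _ = dist φ ψ := by simp

lemma measure_ext_of_dense {D : Set C(M, ℝ)} (hD : Dense D) {m1 m2 : Measure M}
    [IsProbabilityMeasure m1] [IsProbabilityMeasure m2]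
    (h : ∀ ψ ∈ D, ∫ x, ψ x ∂m1 = ∫ x, ψ x ∂m2) : m1 = m2 := by
  have hall : ∀ φ : C(M, ℝ), ∫ x, φ x ∂m1 = ∫ x, φ x ∂m2 := by
    intro φ
    by_contra hne
    set d := dist (∫ x, φ x ∂m1) (∫ x, φ x ∂m2) with hd
    have hdpos : 0 < d := dist_pos.2 hne
    obtain ⟨ψ, hψD, hψ⟩ := hD.exists_dist_lt φ (show 0 < d / 3 by linarith)
    have h1 := dist_integral_le φ ψ m1
    have h2 := dist_integral_le φ ψ m2
    have htri : d ≤ dist (∫ x, φ x ∂m1) (∫ x, ψ x ∂m1)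
        + dist (∫ x, ψ x ∂m1) (∫ x, ψ x ∂m2)
        + dist (∫ x, ψ x ∂m2) (∫ x, φ x ∂m2) := dist_triangle4 _ _ _ _
    have hmid : dist (∫ x, ψ x ∂m1) (∫ x, ψ x ∂m2) = 0 := by
      rw [h ψ hψD, dist_self]
    have h2' : dist (∫ x, ψ x ∂m2) (∫ x, φ x ∂m2) ≤ dist φ ψ := by
      rw [dist_comm]; exact h2
    linarith
  refine ext_of_forall_lintegral_eq_of_IsFiniteMeasure ?_
  intro g
  have hg : Continuous fun x => (g x : ℝ) := NNReal.continuous_coe.comp g.continuous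
  set φg : C(M, ℝ) := ⟨fun x => (g x : ℝ), hg⟩
  have e1 : ∫⁻ x, (g x : ℝ≥0∞) ∂m1 = ENNReal.ofReal (∫ x, φg x ∂m1) :=
    lintegral_coe_eq_integral (fun x => g x) (integrable_continuousMap φg m1)
  have e2 : ∫⁻ x, (g x : ℝ≥0∞) ∂m2 = ENNReal.ofReal (∫ x, φg x ∂m2) :=
    lintegral_coe_eq_integral (fun x => g x) (integrable_continuousMap φg m2)
  rw [e1, e2, hall φg]

end CM

open ProbabilityTheory in
set_option maxHeartbeats 2000000 in
theorem sample_measures_weak_limit_and_past_measurable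
    {Ω M : Type*} [TopologicalSpace Ω] [PolishSpace Ω] [MeasurableSpace Ω] [BorelSpace Ω]
    [MetricSpace M] [CompactSpace M] [MeasurableSpace M] [BorelSpace M]
    (f : Ω → Homeomorph M M)
    (hf : Measurable fun p : Ω × M => f p.1 p.2)
    (hfinv : Measurable fun p : Ω × M => (f p.1).symm p.2)
    (P : Measure Ω) [IsProbabilityMeasure P]
    (Pplus : Measure (ℕ → Ω)) (hPplus : IsIIDProduct ℕ P Pplus)
    (Pz : Measure (ℤ → Ω)) (hPz : IsIIDProduct ℤ P Pz)
    (μ : Measure M) [IsProbabilityMeasure μ]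
    (hstat : ∀ E : Set M, MeasurableSet E → μ E = ∫⁻ ω, μ ((f ω) ⁻¹' E) ∂P)
    (μstar : Measure (M × (ℤ → Ω))) [IsProbabilityMeasure μstar]
    (hinv : Measure.map (fun p : M × (ℤ → Ω) => ((f (p.2 1)) p.1, fun k => p.2 (k + 1)))
        μstar = μstar)
    (hproj : Measure.map (fun p : M × (ℤ → Ω) => (p.1, fun n : ℕ => p.2 ((n : ℤ) + 1)))
        μstar = μ.prod Pplus)
    (μω : (ℤ → Ω) → Measure M)
    (hμω_prob : ∀ ω, IsProbabilityMeasure (μω ω))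
    (hμω_meas : Measurable μω)
    (hdisint : ∀ A : Set (M × (ℤ → Ω)), MeasurableSet A →
      μstar A = ∫⁻ ω, (μω ω) {x : M | (x, ω) ∈ A} ∂Pz) :
    (∀ᵐ ω ∂Pz, ∀ φ : M → ℝ, Continuous φ →
      Tendsto (fun n : ℕ => ∫ x, φ x ∂(Measure.map (fwdPast f ω n) μ)) atTop
        (nhds (∫ x, φ x ∂(μω ω)))) ∧
    ∃ ν : (ℕ → Ω) → Measure M,
      Measurable ν ∧ (∀ y, IsProbabilityMeasure (ν y)) ∧
      ∀ᵐ ω ∂Pz, μω ω = ν (fun n : ℕ => ω (-(n : ℤ))) := by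
  haveI hPzP : IsProbabilityMeasure Pz := hPz.1
  haveI hPplusP : IsProbabilityMeasure Pplus := hPplus.1
  rcases isEmpty_or_nonempty M with hM | hM
  · refine absurd (measure_univ (μ := μ)) ?_
    rw [Set.univ_eq_empty_iff.2 hM]
    simp
  -- the kernel associated to the sample measures
  set κ : Kernel (ℤ → Ω) M := ⟨μω, hμω_meas⟩ with hκdef
  haveI : IsMarkovKernel κ := ⟨hμω_prob⟩
  have hμstar : μstar = Measure.map Prod.swap (Pz.compProd κ) := by
    refine Measure.ext fun A hA => ?_
    rw [Measure.map_apply measurable_swap hA, Measure.compProd_apply (measurable_swap hA),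
      hdisint A hA]
    rfl
  -- disintegration integral formula
  have hF1 : ∀ F : M × (ℤ → Ω) → ℝ, Measurable F → ∀ C : ℝ, (∀ p, |F p| ≤ C) →
      ∫ p, F p ∂μstar = ∫ ω, ∫ x, F (x, ω) ∂(μω ω) ∂Pz := by
    intro F hFm C hFb
    have hint : Integrable (fun q : (ℤ → Ω) × M => F (Prod.swap q)) (Pz.compProd κ) := by
      refine (integrable_const C).mono'
        ((hFm.comp measurable_swap).aestronglyMeasurable) ?_
      exact Filter.Eventually.of_forall fun q => by
        simpa [Real.norm_eq_abs] using hFb (Prod.swap q)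
    rw [hμstar, integral_map measurable_swap.aemeasurable hFm.aestronglyMeasurable,
      Measure.integral_compProd hint]
    rfl
  -- relabelling of iid products
  have hrelabel : ∀ r : ℕ → ℤ, Function.Injective r →
      Measure.map (fun (ω : ℤ → Ω) (j : ℕ) => ω (r j)) Pz = Pplus := by
    intro r hr
    exact IsIIDProduct.unique P (IsIIDProduct.map_relabel P hPz r hr) hPplus
  -- iterated invariance
  set T : M × (ℤ → Ω) → M × (ℤ → Ω) :=
    fun p => ((f (p.2 1)) p.1, fun k => p.2 (k + 1)) with hTdef
  have hT_meas : Measurable T := by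
    have h1 : Measurable fun p : M × (ℤ → Ω) => (p.2 1, p.1) :=
      ((measurable_pi_apply 1).comp measurable_snd).prodMk measurable_fst
    exact (hf.comp h1).prodMk
      (measurable_pi_lambda _ fun k => (measurable_pi_apply (k + 1)).comp measurable_snd)
  have hmapT : ∀ n : ℕ, Measure.map (T^[n]) μstar = μstar := by
    intro n
    induction n with
    | zero => simp
    | succ n ih =>
      rw [Function.iterate_succ, ← Measure.map_map (hT_meas.iterate n) hT_meas]
      rw [show Measure.map T μstar = μstar from hinv, ih]
  -- the key martingale convergence step
  have key : ∀ φ : C(M, ℝ), ∀ᵐ ω ∂Pz,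
      Tendsto (fun n => ∫ x, φ (fwdPast f ω n x) ∂μ) atTop (nhds (∫ x, φ x ∂(μω ω))) := by
    intro φ
    -- the filtration of the coordinates `≥ 1 - n`
    set r : ℕ → (ℤ → Ω) → (ℕ → Ω) := fun n ω j => ω ((j : ℤ) + 1 - n) with hrdef
    have hr_meas : ∀ n, Measurable (r n) :=
      fun n => measurable_pi_lambda _ (fun j => measurable_pi_apply _)
    set ℱ : Filtration ℕ (inferInstance : MeasurableSpace (ℤ → Ω)) :=
      { seq := fun n => MeasurableSpace.comap (r n) inferInstance
        mono' := monotone_nat_of_le_succ (fun n => by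
          have hcomp : r n = (fun (y : ℕ → Ω) (j : ℕ) => y (j + 1)) ∘ r (n + 1) := by
            funext ω j
            show ω ((j : ℤ) + 1 - n) = ω (((j + 1 : ℕ) : ℤ) + 1 - ((n : ℕ) + 1 : ℕ))
            congr 1; push_cast; ring
          rw [hcomp, ← MeasurableSpace.comap_comp]
          exact MeasurableSpace.comap_mono
            ((measurable_pi_lambda _ (fun j => measurable_pi_apply _)).comap_le))
        le' := fun n => (hr_meas n).comap_le } with hFdef
    have hℱ : ∀ n, ℱ n = MeasurableSpace.comap (r n) inferInstance := fun n => rfl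
    have hsup : (⨆ n, ℱ n) = (inferInstance : MeasurableSpace (ℤ → Ω)) := by
      refine le_antisymm (iSup_le fun n => ℱ.le n) ?_
      show (⨆ k : ℤ, MeasurableSpace.comap (fun ω : ℤ → Ω => ω k) inferInstance) ≤ ⨆ n, ℱ n
      refine iSup_le fun k => ?_
      set n : ℕ := (1 - k).toNat with hn0
      have hn : (1 : ℤ) - k ≤ (n : ℤ) := Int.self_le_toNat _
      set j : ℕ := (k + (n : ℤ) - 1).toNat with hj0
      have hj : (j : ℤ) = k + (n : ℤ) - 1 := Int.toNat_of_nonneg (by omega)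
      have hcomp : (fun ω : ℤ → Ω => ω k) = (fun y : ℕ → Ω => y j) ∘ r n := by
        funext ω
        show ω k = ω ((j : ℤ) + 1 - n)
        congr 1; omega
      refine le_trans ?_ (le_iSup _ n)
      rw [hℱ n, hcomp, ← MeasurableSpace.comap_comp]
      exact MeasurableSpace.comap_mono (measurable_pi_apply j).comap_le
    -- the limiting function
    set h0 : (ℤ → Ω) → ℝ := fun ω => ∫ x, φ x ∂(μω ω) with hh0
    have h0_meas : Measurable h0 := by
      have hsm : StronglyMeasurable fun q : (ℤ → Ω) × M => φ q.2 :=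
        φ.continuous.stronglyMeasurable.comp_measurable measurable_snd
      exact (MeasureTheory.StronglyMeasurable.integral_kernel_prod_right
        (κ := κ) (f := fun _ x => φ x) hsm).measurable
    have h0_bdd : ∀ ω, |h0 ω| ≤ ‖φ‖ := by
      intro ω
      haveI := hμω_prob ω
      calc |∫ x, φ x ∂(μω ω)| ≤ ∫ x, ‖φ x‖ ∂(μω ω) := by
            simpa [Real.norm_eq_abs] using norm_integral_le_integral_norm (μ := μω ω) fun x => φ x
        _ ≤ ∫ _x, ‖φ‖ ∂(μω ω) := by
            refine integral_mono (integrable_continuousMap φ (μω ω)).norm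
              (integrable_const _) fun x => φ.norm_coe_le_norm x
        _ = ‖φ‖ := by simp
    have h0_int : Integrable h0 Pz := by
      refine (integrable_const (‖φ‖)).mono' h0_meas.aestronglyMeasurable ?_
      exact Filter.Eventually.of_forall fun ω => by
        simpa [Real.norm_eq_abs] using h0_bdd ω
    -- the martingale
    set g : ℕ → (ℤ → Ω) → ℝ := fun n ω => ∫ x, φ (fwdPast f ω n x) ∂μ with hgdef
    have g_meas : ∀ n, Measurable (g n) := by
      intro n
      have hsm : StronglyMeasurable fun q : (ℤ → Ω) × M => φ (fwdPast f q.1 n q.2) :=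
        φ.continuous.stronglyMeasurable.comp_measurable (measurable_fwdPast f hf n)
      exact (MeasureTheory.StronglyMeasurable.integral_kernel_prod_right
        (κ := Kernel.const (ℤ → Ω) μ) (f := fun ω x => φ (fwdPast f ω n x)) hsm).measurable
    have g_bdd : ∀ n ω, |g n ω| ≤ ‖φ‖ := by
      intro n ω
      calc |∫ x, φ (fwdPast f ω n x) ∂μ| ≤ ∫ x, ‖φ (fwdPast f ω n x)‖ ∂μ := by
            simpa [Real.norm_eq_abs] using
              norm_integral_le_integral_norm (μ := μ) fun x => φ (fwdPast f ω n x)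
        _ ≤ ∫ _x, ‖φ‖ ∂μ := by
            refine integral_mono ?_ (integrable_const _) fun x => φ.norm_coe_le_norm _
            refine ((integrable_const (‖φ‖)).mono' ?_ ?_).norm
            · exact (φ.continuous.measurable.comp
                ((measurable_fwdPast f hf n).comp
                  (measurable_const.prodMk measurable_id))).aestronglyMeasurable
            · exact Filter.Eventually.of_forall fun x => φ.norm_coe_le_norm _
        _ = ‖φ‖ := by simp
    have g_int : ∀ n, Integrable (g n) Pz := by
      intro n
      refine (integrable_const (‖φ‖)).mono' (g_meas n).aestronglyMeasurable ?_
      exact Filter.Eventually.of_forall fun ω => by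
        simpa [Real.norm_eq_abs] using g_bdd n ω
    -- `fwdPast` factors through `r n`
    have hfw : ∀ (n : ℕ) (ω : ℤ → Ω), fwdPast f ω n = cmpN f (r n ω) n := by
      intro n ω
      rw [fwdPast_eq_cmpFut, cmpFut_eq_cmpN]
    -- the conditional expectation identity
    have hcond : ∀ n : ℕ, g n =ᵐ[Pz] Pz[h0 | ℱ n] := by
      intro n
      haveI : SigmaFinite (Pz.trim (ℱ.le n)) := by
        have : IsFiniteMeasure (Pz.trim (ℱ.le n)) := isFiniteMeasure_trim _
        infer_instance
      refine MeasureTheory.ae_eq_condExp_of_forall_setIntegral_eq (ℱ.le n) h0_int ?_ ?_ ?_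
      · intro s _ _
        exact (g_int n).integrableOn
      · intro s hs _
        obtain ⟨B, hB, rfl⟩ := hs
        -- notation
        set ψB : (ℕ → Ω) → ℝ := Set.indicator B (fun _ => (1 : ℝ)) with hψBdef
        have hψB_meas : Measurable ψB := measurable_const.indicator hB
        have hψB_bdd : ∀ y, |ψB y| ≤ 1 := by
          intro y
          by_cases hy : y ∈ B <;>
            simp [hψBdef, Set.indicator_of_mem, Set.indicator_of_notMem, hy]
        set Ψ0 : (ℕ → Ω) → ℝ := fun y => ∫ x, φ (cmpN f y n x) ∂μ with hΨ0def
        have hΨ0_meas : Measurable Ψ0 := by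
          have hsm : StronglyMeasurable fun q : (ℕ → Ω) × M => φ (cmpN f q.1 n q.2) :=
            φ.continuous.stronglyMeasurable.comp_measurable (measurable_cmpN f hf n)
          exact (MeasureTheory.StronglyMeasurable.integral_kernel_prod_right
            (κ := Kernel.const (ℕ → Ω) μ) (f := fun y x => φ (cmpN f y n x)) hsm).measurable
        -- set integrals as weighted integrals
        have hind : ∀ F : (ℤ → Ω) → ℝ,
            ∫ ω in r n ⁻¹' B, F ω ∂Pz = ∫ ω, ψB (r n ω) * F ω ∂Pz := by
          intro F
          rw [← integral_indicator ((hr_meas n) hB)]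
          refine integral_congr_ae (Filter.Eventually.of_forall fun ω => ?_)
          by_cases hω : r n ω ∈ B
          · simp [Set.indicator_of_mem, hω, hψBdef, Set.mem_preimage]
          · simp [Set.indicator_of_notMem, hω, hψBdef, Set.mem_preimage]
        -- the left-hand side
        have hmaprn : Measure.map (r n) Pz = Pplus :=
          hrelabel (fun j : ℕ => (j : ℤ) + 1 - n)
            (by intro a b h
                have h2 : (a : ℤ) + 1 - n = (b : ℤ) + 1 - n := h
                omega)
        have hcompm : Measurable fun y : ℕ → Ω => ψB y * Ψ0 y := hψB_meas.mul hΨ0_meas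
        have hLHS : ∫ ω, ψB (r n ω) * g n ω ∂Pz = ∫ y, ψB y * Ψ0 y ∂Pplus := by
          have e1 : ∫ y, ψB y * Ψ0 y ∂(Measure.map (r n) Pz)
              = ∫ ω, ψB (r n ω) * Ψ0 (r n ω) ∂Pz :=
            integral_map (hr_meas n).aemeasurable hcompm.aestronglyMeasurable
          calc ∫ ω, ψB (r n ω) * g n ω ∂Pz
              = ∫ ω, ψB (r n ω) * Ψ0 (r n ω) ∂Pz := by
                refine integral_congr_ae (Filter.Eventually.of_forall fun ω => ?_)
                show ψB (r n ω) * g n ω = ψB (r n ω) * Ψ0 (r n ω)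
                have hgΨ : g n ω = Ψ0 (r n ω) := by
                  show (∫ x, φ (fwdPast f ω n x) ∂μ) = ∫ x, φ (cmpN f (r n ω) n x) ∂μ
                  rw [hfw n ω]
                rw [hgΨ]
            _ = ∫ y, ψB y * Ψ0 y ∂(Measure.map (r n) Pz) := e1.symm
            _ = ∫ y, ψB y * Ψ0 y ∂Pplus := by rw [hmaprn]
        -- the right-hand side
        have hFm : Measurable fun p : M × (ℤ → Ω) => ψB (r n p.2) * φ p.1 :=
          (hψB_meas.comp ((hr_meas n).comp measurable_snd)).mul
            (φ.continuous.measurable.comp measurable_fst)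
        have hFb : ∀ p : M × (ℤ → Ω), |ψB (r n p.2) * φ p.1| ≤ 1 * ‖φ‖ := by
          intro p
          rw [abs_mul]
          exact mul_le_mul (hψB_bdd _)
            (by simpa [Real.norm_eq_abs] using φ.norm_coe_le_norm p.1) (abs_nonneg _) zero_le_one
        have hRHS : ∫ ω, ψB (r n ω) * h0 ω ∂Pz = ∫ y, ψB y * Ψ0 y ∂Pplus := by
          have e1 : ∫ p, ψB (r n p.2) * φ p.1 ∂μstar = ∫ ω, ψB (r n ω) * h0 ω ∂Pz := by
            rw [hF1 (fun p => ψB (r n p.2) * φ p.1) hFm (1 * ‖φ‖) hFb]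
            refine integral_congr_ae (Filter.Eventually.of_forall fun ω => ?_)
            haveI := hμω_prob ω
            show ∫ x, ψB (r n ω) * φ x ∂(μω ω) = ψB (r n ω) * h0 ω
            rw [MeasureTheory.integral_const_mul]
          have e2 : ∫ p, ψB (r n p.2) * φ p.1 ∂μstar
              = ∫ p, ψB (r n ((T^[n] p).2)) * φ ((T^[n] p).1) ∂μstar := by
            conv_lhs => rw [← hmapT n]
            exact integral_map (hT_meas.iterate n).aemeasurable hFm.aestronglyMeasurable
          have e3 : ∀ p : M × (ℤ → Ω), ψB (r n ((T^[n] p).2)) * φ ((T^[n] p).1)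
              = ψB (fun j : ℕ => p.2 ((j : ℤ) + 1))
                * φ (cmpN f (fun j : ℕ => p.2 ((j : ℤ) + 1)) n p.1) := by
            rintro ⟨x, ω⟩
            have hit : T^[n] (x, ω) = (cmpFut f ω n x, fun k => ω (k + n)) := by
              rw [hTdef]; exact skew_iterate f n x ω
            rw [hit]
            have hr' : r n (fun k : ℤ => ω (k + n)) = fun j : ℕ => ω ((j : ℤ) + 1) := by
              funext j
              show ω ((j : ℤ) + 1 - n + n) = ω ((j : ℤ) + 1)
              congr 1; ring
            show ψB (r n (fun k : ℤ => ω (k + n))) * φ (cmpFut f ω n x) = _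
            rw [hr', cmpFut_eq_cmpN f ω n]
          have e3' : ∫ p, ψB (r n ((T^[n] p).2)) * φ ((T^[n] p).1) ∂μstar
              = ∫ p : M × (ℤ → Ω), ψB (fun j : ℕ => p.2 ((j : ℤ) + 1))
                * φ (cmpN f (fun j : ℕ => p.2 ((j : ℤ) + 1)) n p.1) ∂μstar :=
            integral_congr_ae (Filter.Eventually.of_forall fun p => e3 p)
          have hΦm : Measurable fun q : M × (ℕ → Ω) => ψB q.2 * φ (cmpN f q.2 n q.1) := by
            refine (hψB_meas.comp measurable_snd).mul ?_
            refine φ.continuous.measurable.comp ?_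
            exact (measurable_cmpN f hf n).comp (measurable_snd.prodMk measurable_fst)
          have hprojm : Measurable fun p : M × (ℤ → Ω) =>
              (p.1, fun j : ℕ => p.2 ((j : ℤ) + 1)) :=
            measurable_fst.prodMk
              (measurable_pi_lambda _ fun j => (measurable_pi_apply _).comp measurable_snd)
          have e4 : ∫ p : M × (ℤ → Ω), ψB (fun j : ℕ => p.2 ((j : ℤ) + 1))
                * φ (cmpN f (fun j : ℕ => p.2 ((j : ℤ) + 1)) n p.1) ∂μstar
              = ∫ q : M × (ℕ → Ω), ψB q.2 * φ (cmpN f q.2 n q.1) ∂(μ.prod Pplus) := by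
            conv_rhs => rw [← hproj]
            exact (integral_map hprojm.aemeasurable hΦm.aestronglyMeasurable).symm
          have hΦint : Integrable (fun q : M × (ℕ → Ω) => ψB q.2 * φ (cmpN f q.2 n q.1))
              (μ.prod Pplus) := by
            refine (integrable_const (1 * ‖φ‖)).mono' hΦm.aestronglyMeasurable ?_
            refine Filter.Eventually.of_forall fun q => ?_
            rw [Real.norm_eq_abs, abs_mul]
            exact mul_le_mul (hψB_bdd _)
              (by simpa [Real.norm_eq_abs] using φ.norm_coe_le_norm _) (abs_nonneg _) zero_le_one
          have e5 : ∫ q : M × (ℕ → Ω), ψB q.2 * φ (cmpN f q.2 n q.1) ∂(μ.prod Pplus)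
              = ∫ y, ψB y * Ψ0 y ∂Pplus := by
            rw [integral_prod _ hΦint]
            rw [integral_integral_swap hΦint]
            refine integral_congr_ae (Filter.Eventually.of_forall fun y => ?_)
            show ∫ x, ψB y * φ (cmpN f y n x) ∂μ = ψB y * Ψ0 y
            rw [MeasureTheory.integral_const_mul]
          rw [← e1, e2, e3', e4, e5]
        rw [hind (g n), hind h0, hLHS, hRHS]
      · refine MeasureTheory.StronglyMeasurable.aestronglyMeasurable ?_
        have hfac : g n = (fun y : ℕ → Ω => ∫ x, φ (cmpN f y n x) ∂μ) ∘ r n := by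
          funext ω
          show (∫ x, φ (fwdPast f ω n x) ∂μ) = ∫ x, φ (cmpN f (r n ω) n x) ∂μ
          rw [hfw n ω]
        have hΨ : Measurable fun y : ℕ → Ω => ∫ x, φ (cmpN f y n x) ∂μ := by
          have hsm : StronglyMeasurable fun q : (ℕ → Ω) × M => φ (cmpN f q.1 n q.2) :=
            φ.continuous.stronglyMeasurable.comp_measurable (measurable_cmpN f hf n)
          exact (MeasureTheory.StronglyMeasurable.integral_kernel_prod_right
            (κ := Kernel.const (ℕ → Ω) μ) (f := fun y x => φ (cmpN f y n x)) hsm).measurable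
        rw [hℱ n, hfac]
        exact (hΨ.comp (measurable_iff_comap_le.mpr le_rfl)).stronglyMeasurable
    -- Levy upwards
    have hSM : StronglyMeasurable[⨆ n, ℱ n] h0 := by
      rw [hsup]
      exact h0_meas.stronglyMeasurable
    have hLevy := h0_int.tendsto_ae_condExp hSM
    have hae : ∀ᵐ ω ∂Pz, ∀ n, g n ω = (Pz[h0 | ℱ n]) ω := ae_all_iff.2 hcond
    filter_upwards [hLevy, hae] with ω h1 h2
    have heq : (fun n => g n ω) = fun n => (Pz[h0 | ℱ n]) ω := funext h2
    show Tendsto (fun n => g n ω) atTop (nhds (h0 ω))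
    rw [heq]
    exact h1
  -- part 1
  obtain ⟨D, hDc, hDd⟩ := TopologicalSpace.exists_countable_dense C(M, ℝ)
  -- Part 1
  have part1 : ∀ᵐ ω ∂Pz, ∀ φ0 : M → ℝ, Continuous φ0 →
      Tendsto (fun n : ℕ => ∫ x, φ0 x ∂(Measure.map (fwdPast f ω n) μ)) atTop
        (nhds (∫ x, φ0 x ∂(μω ω))) := by
    have hkeyD : ∀ᵐ ω ∂Pz, ∀ ψ ∈ D,
        Tendsto (fun n => ∫ x, ψ (fwdPast f ω n x) ∂μ) atTop (nhds (∫ x, ψ x ∂(μω ω))) :=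
      (ae_ball_iff hDc).2 fun ψ _ => key ψ
    filter_upwards [hkeyD] with ω hω
    intro φ0 hφ0
    set Φ : C(M, ℝ) := ⟨φ0, hφ0⟩ with hΦdef
    have hmap : ∀ (χ : C(M, ℝ)) (n : ℕ),
        ∫ x, χ x ∂(Measure.map (fwdPast f ω n) μ) = ∫ x, χ (fwdPast f ω n x) ∂μ := fun χ n =>
      integral_map (fwdPast_continuous f ω n).measurable.aemeasurable
        χ.continuous.aestronglyMeasurable
    rw [Metric.tendsto_atTop]
    intro ε hε
    obtain ⟨ψ, hψD, hψ⟩ := hDd.exists_dist_lt Φ (show (0 : ℝ) < ε / 4 by linarith)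
    have hten := hω ψ hψD
    rw [Metric.tendsto_atTop] at hten
    obtain ⟨N, hN⟩ := hten (ε / 4) (by linarith)
    refine ⟨N, fun n hn => ?_⟩
    haveI : IsProbabilityMeasure (Measure.map (fwdPast f ω n) μ) :=
      Measure.isProbabilityMeasure_map (fwdPast_continuous f ω n).measurable.aemeasurable
    haveI := hμω_prob ω
    have d1 : dist (∫ x, Φ x ∂(Measure.map (fwdPast f ω n) μ))
        (∫ x, ψ x ∂(Measure.map (fwdPast f ω n) μ)) ≤ dist Φ ψ := dist_integral_le Φ ψ _
    have d2 : dist (∫ x, ψ x ∂(μω ω)) (∫ x, Φ x ∂(μω ω)) ≤ dist Φ ψ := by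
      have := dist_integral_le ψ Φ (μω ω)
      rwa [dist_comm ψ Φ] at this
    have d3 : dist (∫ x, ψ x ∂(Measure.map (fwdPast f ω n) μ)) (∫ x, ψ x ∂(μω ω)) < ε / 4 := by
      rw [hmap ψ n]; exact hN n hn
    have htri := dist_triangle4 (∫ x, Φ x ∂(Measure.map (fwdPast f ω n) μ))
      (∫ x, ψ x ∂(Measure.map (fwdPast f ω n) μ)) (∫ x, ψ x ∂(μω ω)) (∫ x, Φ x ∂(μω ω))
    show dist (∫ x, φ0 x ∂(Measure.map (fwdPast f ω n) μ)) (∫ x, φ0 x ∂(μω ω)) < ε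
    have hfin : dist (∫ x, Φ x ∂(Measure.map (fwdPast f ω n) μ)) (∫ x, Φ x ∂(μω ω)) < ε := by
      linarith
    exact hfin
  -- Part 2
  haveI : Nonempty M := hM
  set past : (ℤ → Ω) → (ℕ → Ω) := fun ω j => ω (-(j : ℤ)) with hpastdef
  have hpast_meas : Measurable past := measurable_pi_lambda _ fun j => measurable_pi_apply _
  have hpastPz : Measure.map past Pz = Pplus :=
    hrelabel (fun j : ℕ => -(j : ℤ))
      (by intro a b h
          have h2 : -(a : ℤ) = -(b : ℤ) := h
          omega)
  have hsnd : Measure.map Prod.snd μstar = Pz := by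
    refine Measure.ext fun B hB => ?_
    rw [Measure.map_apply measurable_snd hB, hdisint _ (measurable_snd hB)]
    have hpt : ∀ ω, μω ω {x : M | (x, ω) ∈ Prod.snd ⁻¹' B}
        = B.indicator (fun _ => (1 : ℝ≥0∞)) ω := by
      intro ω
      by_cases hω : ω ∈ B
      · rw [Set.indicator_of_mem hω]
        have huniv : {x : M | (x, ω) ∈ Prod.snd ⁻¹' B} = Set.univ := by
          ext x; simp [hω]
        rw [huniv, (hμω_prob ω).measure_univ]
      · rw [Set.indicator_of_notMem hω]
        have hemp : {x : M | (x, ω) ∈ Prod.snd ⁻¹' B} = ∅ := by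
          ext x; simp [hω]
        rw [hemp, measure_empty]
    rw [lintegral_congr hpt, lintegral_indicator hB]
    simp
  set prM : M × (ℤ → Ω) → (ℕ → Ω) × M := fun p => (past p.2, p.1) with hprMdef
  have hprM_meas : Measurable prM := (hpast_meas.comp measurable_snd).prodMk measurable_fst
  set ρ : Measure ((ℕ → Ω) × M) := Measure.map prM μstar with hρdef
  haveI : IsProbabilityMeasure ρ := Measure.isProbabilityMeasure_map hprM_meas.aemeasurable
  have hρfst : ρ.fst = Pplus := by
    rw [hρdef, Measure.fst, Measure.map_map measurable_fst hprM_meas]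
    have hc : (Prod.fst ∘ prM) = past ∘ Prod.snd := rfl
    rw [hc, ← Measure.map_map hpast_meas measurable_snd, hsnd, hpastPz]
  set ν : Kernel (ℕ → Ω) M := ρ.condKernel with hνdef
  haveI : IsMarkovKernel ν := by rw [hνdef]; infer_instance
  set embed : (ℕ → Ω) → (ℤ → Ω) := fun y k => y (-k).toNat with hembeddef
  have hembed_meas : Measurable embed := measurable_pi_lambda _ fun k => measurable_pi_apply _
  have hembed_past : ∀ (ω : ℤ → Ω) (n : ℕ), fwdPast f (embed (past ω)) n = fwdPast f ω n := by
    intro ω n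
    refine fwdPast_congr f n (fun k _ => ?_)
    show past ω (-(-(k : ℤ))).toNat = ω (-(k : ℤ))
    rw [neg_neg]
    show ω (-(((k : ℤ).toNat : ℕ) : ℤ)) = ω (-(k : ℤ))
    congr 1
  have main2 : ∀ ψ : C(M, ℝ), ∀ᵐ ω ∂Pz,
      ∫ x, ψ x ∂(μω ω) = ∫ x, ψ x ∂(ν (past ω)) := by
    intro ψ
    set G : ℕ → (ℕ → Ω) → ℝ := fun n y => ∫ x, ψ (fwdPast f (embed y) n x) ∂μ with hGdef
    have hG_meas : ∀ n, Measurable (G n) := by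
      intro n
      have hsm : StronglyMeasurable fun q : (ℕ → Ω) × M => ψ (fwdPast f (embed q.1) n q.2) := by
        refine ψ.continuous.stronglyMeasurable.comp_measurable ?_
        exact (measurable_fwdPast f hf n).comp
          ((hembed_meas.comp measurable_fst).prodMk measurable_snd)
      exact (MeasureTheory.StronglyMeasurable.integral_kernel_prod_right
        (κ := Kernel.const (ℕ → Ω) μ) (f := fun y x => ψ (fwdPast f (embed y) n x)) hsm).measurable
    set H : (ℕ → Ω) → ℝ :=
      fun y => max (-‖ψ‖) (min ‖ψ‖ (Filter.limsup (fun n => G n y) atTop)) with hHdef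
    have hH_meas : Measurable H :=
      measurable_const.max (measurable_const.min (Measurable.limsup hG_meas))
    have hH_bdd : ∀ y, |H y| ≤ ‖ψ‖ := by
      intro y
      rw [abs_le]
      refine ⟨le_max_left _ _, max_le (by linarith [norm_nonneg ψ]) (min_le_left _ _)⟩
    set h0ψ : (ℤ → Ω) → ℝ := fun ω => ∫ x, ψ x ∂(μω ω) with hh0ψdef
    have h0ψ_meas : Measurable h0ψ := by
      have hsm : StronglyMeasurable fun q : (ℤ → Ω) × M => ψ q.2 :=
        ψ.continuous.stronglyMeasurable.comp_measurable measurable_snd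
      exact (MeasureTheory.StronglyMeasurable.integral_kernel_prod_right
        (κ := κ) (f := fun _ x => ψ x) hsm).measurable
    have h0ψ_bdd : ∀ ω, |h0ψ ω| ≤ ‖ψ‖ := by
      intro ω
      haveI := hμω_prob ω
      calc |∫ x, ψ x ∂(μω ω)| ≤ ∫ x, ‖ψ x‖ ∂(μω ω) := by
            simpa [Real.norm_eq_abs] using norm_integral_le_integral_norm (μ := μω ω) fun x => ψ x
        _ ≤ ∫ _x, ‖ψ‖ ∂(μω ω) := by
            refine integral_mono (integrable_continuousMap ψ (μω ω)).norm
              (integrable_const _) fun x => ψ.norm_coe_le_norm x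
        _ = ‖ψ‖ := by simp
    have hA : ∀ᵐ ω ∂Pz, h0ψ ω = H (past ω) := by
      filter_upwards [key ψ] with ω hten
      have hGp : ∀ n, G n (past ω) = ∫ x, ψ (fwdPast f ω n x) ∂μ := by
        intro n
        show (∫ x, ψ (fwdPast f (embed (past ω)) n x) ∂μ) = _
        rw [hembed_past ω n]
      have hten' : Tendsto (fun n => G n (past ω)) atTop (nhds (h0ψ ω)) := by
        have heq : (fun n => G n (past ω)) = fun n => ∫ x, ψ (fwdPast f ω n x) ∂μ := funext hGp
        rw [heq]; exact hten
      have hls : Filter.limsup (fun n => G n (past ω)) atTop = h0ψ ω := hten'.limsup_eq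
      obtain ⟨hb1, hb2⟩ := abs_le.1 (h0ψ_bdd ω)
      show h0ψ ω = max (-‖ψ‖) (min ‖ψ‖ (Filter.limsup (fun n => G n (past ω)) atTop))
      rw [hls, min_eq_right hb2, max_eq_right hb1]
    have hνψ_meas : Measurable fun y => ∫ x, ψ x ∂(ν y) := by
      have hsm : StronglyMeasurable fun q : (ℕ → Ω) × M => ψ q.2 :=
        ψ.continuous.stronglyMeasurable.comp_measurable measurable_snd
      exact (MeasureTheory.StronglyMeasurable.integral_kernel_prod_right
        (κ := ν) (f := fun _ x => ψ x) hsm).measurable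
    have hνψ_bdd : ∀ y, |∫ x, ψ x ∂(ν y)| ≤ ‖ψ‖ := by
      intro y
      haveI : IsProbabilityMeasure (ν y) := inferInstance
      calc |∫ x, ψ x ∂(ν y)| ≤ ∫ x, ‖ψ x‖ ∂(ν y) := by
            simpa [Real.norm_eq_abs] using norm_integral_le_integral_norm (μ := ν y) fun x => ψ x
        _ ≤ ∫ _x, ‖ψ‖ ∂(ν y) := by
            refine integral_mono (integrable_continuousMap ψ (ν y)).norm
              (integrable_const _) fun x => ψ.norm_coe_le_norm x
        _ = ‖ψ‖ := by simp
    have hBB : (fun y => ∫ x, ψ x ∂(ν y)) =ᵐ[Pplus] H := by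
      refine ae_eq_of_forall_setIntegral_eq_of_sigmaFinite ?_ ?_ ?_
      · intro s _ _
        refine ((integrable_const (‖ψ‖)).mono' hνψ_meas.aestronglyMeasurable ?_).integrableOn
        exact Filter.Eventually.of_forall fun y => by
          simpa [Real.norm_eq_abs] using hνψ_bdd y
      · intro s _ _
        refine ((integrable_const (‖ψ‖)).mono' hH_meas.aestronglyMeasurable ?_).integrableOn
        exact Filter.Eventually.of_forall fun y => by
          simpa [Real.norm_eq_abs] using hH_bdd y
      · intro s hs _
        have hint : IntegrableOn (fun q : (ℕ → Ω) × M => ψ q.2) (s ×ˢ Set.univ) ρ := by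
          refine ((integrable_const (‖ψ‖)).mono'
            ((ψ.continuous.measurable.comp measurable_snd).aestronglyMeasurable) ?_).integrableOn
          exact Filter.Eventually.of_forall fun q => by
            simpa [Real.norm_eq_abs] using abs_le.2 (abs_le.1 (by
              simpa [Real.norm_eq_abs] using ψ.norm_coe_le_norm q.2))
        have c1 : ∫ y in s, (∫ x, ψ x ∂(ν y)) ∂Pplus = ∫ q in s ×ˢ Set.univ, ψ q.2 ∂ρ := by
          rw [← hρfst, hνdef]
          exact Measure.setIntegral_condKernel_univ_right hs hint
        have c2 : ∫ q in s ×ˢ Set.univ, ψ q.2 ∂ρ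
            = ∫ p in prM ⁻¹' (s ×ˢ Set.univ), ψ p.1 ∂μstar := by
          rw [hρdef]
          exact setIntegral_map (hs.prod MeasurableSet.univ)
            ((ψ.continuous.measurable.comp measurable_snd).aestronglyMeasurable)
            hprM_meas.aemeasurable
        have hpre : prM ⁻¹' (s ×ˢ Set.univ) = Prod.snd ⁻¹' (past ⁻¹' s) := by
          ext p; simp [hprMdef, Set.mem_prod]
        set χ : (ℤ → Ω) → ℝ := (past ⁻¹' s).indicator (fun _ => (1 : ℝ)) with hχdef
        have hχ_meas : Measurable χ := measurable_const.indicator (hpast_meas hs)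
        have hχ_bdd : ∀ ω, |χ ω| ≤ 1 := by
          intro ω
          by_cases hω : ω ∈ past ⁻¹' s <;>
            simp [hχdef, Set.indicator_of_mem, Set.indicator_of_notMem, hω]
        have c4 : ∫ p in Prod.snd ⁻¹' (past ⁻¹' s), ψ p.1 ∂μstar
            = ∫ p : M × (ℤ → Ω), χ p.2 * ψ p.1 ∂μstar := by
          rw [← integral_indicator (measurable_snd (hpast_meas hs))]
          refine integral_congr_ae (Filter.Eventually.of_forall fun p => ?_)
          by_cases hp : past p.2 ∈ s
          · simp [Set.indicator_of_mem, hp, hχdef, Set.mem_preimage]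
          · simp [Set.indicator_of_notMem, hp, hχdef, Set.mem_preimage]
        have c5 : ∫ p : M × (ℤ → Ω), χ p.2 * ψ p.1 ∂μstar = ∫ ω, χ ω * h0ψ ω ∂Pz := by
          rw [hF1 (fun p => χ p.2 * ψ p.1)
            ((hχ_meas.comp measurable_snd).mul (ψ.continuous.measurable.comp measurable_fst))
            (1 * ‖ψ‖) ?_]
          · refine integral_congr_ae (Filter.Eventually.of_forall fun ω => ?_)
            haveI := hμω_prob ω
            show ∫ x, χ ω * ψ x ∂(μω ω) = χ ω * h0ψ ω
            rw [MeasureTheory.integral_const_mul]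
          · intro p
            rw [abs_mul]
            exact mul_le_mul (hχ_bdd _)
              (by simpa [Real.norm_eq_abs] using ψ.norm_coe_le_norm p.1)
              (abs_nonneg _) zero_le_one
        have c6 : ∫ ω, χ ω * h0ψ ω ∂Pz = ∫ ω, χ ω * H (past ω) ∂Pz :=
          integral_congr_ae (hA.mono fun ω hω => by
            show χ ω * h0ψ ω = χ ω * H (past ω)
            rw [hω])
        have c7 : ∫ ω, χ ω * H (past ω) ∂Pz = ∫ y in s, H y ∂Pplus := by
          have hmeasy : Measurable fun y : ℕ → Ω => Set.indicator s (fun _ => (1 : ℝ)) y * H y :=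
            (measurable_const.indicator hs).mul hH_meas
          have e : ∫ y, Set.indicator s (fun _ => (1 : ℝ)) y * H y ∂(Measure.map past Pz)
              = ∫ ω, Set.indicator s (fun _ => (1 : ℝ)) (past ω) * H (past ω) ∂Pz :=
            integral_map hpast_meas.aemeasurable hmeasy.aestronglyMeasurable
          have e2 : ∫ ω, χ ω * H (past ω) ∂Pz
              = ∫ ω, Set.indicator s (fun _ => (1 : ℝ)) (past ω) * H (past ω) ∂Pz := by
            refine integral_congr_ae (Filter.Eventually.of_forall fun ω => ?_)
            have hχω : χ ω = Set.indicator s (fun _ => (1 : ℝ)) (past ω) := by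
              by_cases hω : past ω ∈ s
              · simp [hχdef, Set.indicator_of_mem, hω, Set.mem_preimage]
              · simp [hχdef, Set.indicator_of_notMem, hω, Set.mem_preimage]
            show χ ω * H (past ω) = Set.indicator s (fun _ => (1 : ℝ)) (past ω) * H (past ω)
            rw [hχω]
          rw [e2, ← e, hpastPz, ← integral_indicator hs]
          refine integral_congr_ae (Filter.Eventually.of_forall fun y => ?_)
          by_cases hy : y ∈ s
          · simp [Set.indicator_of_mem, hy]
          · simp [Set.indicator_of_notMem, hy]
        rw [c1, c2, hpre, c4, c5, c6, c7]
    have hB' : ∀ᵐ ω ∂Pz, ∫ x, ψ x ∂(ν (past ω)) = H (past ω) := by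
      have hmeasset : MeasurableSet {y : ℕ → Ω | ∫ x, ψ x ∂(ν y) = H y} :=
        measurableSet_eq_fun hνψ_meas hH_meas
      have hmapped : ∀ᵐ y ∂(Measure.map past Pz), ∫ x, ψ x ∂(ν y) = H y := by
        rw [hpastPz]; exact hBB
      exact (ae_map_iff hpast_meas.aemeasurable hmeasset).1 hmapped
    filter_upwards [hA, hB'] with ω h1 h2
    show h0ψ ω = ∫ x, ψ x ∂(ν (past ω))
    rw [h1, ← h2]
  refine ⟨part1, ⟨fun y => ν y, ν.measurable, fun y => inferInstance, ?_⟩⟩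
  have hDae : ∀ᵐ ω ∂Pz, ∀ ψ ∈ D, ∫ x, ψ x ∂(μω ω) = ∫ x, ψ x ∂(ν (past ω)) :=
    (ae_ball_iff hDc).2 fun ψ _ => main2 ψ
  filter_upwards [hDae] with ω hω
  haveI := hμω_prob ω
  haveI : IsProbabilityMeasure (ν (past ω)) := inferInstance
  exact measure_ext_of_dense hDd hω
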